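/- Let σ ∈ 𝔖 with σ ≠ 𝔬. Write m_σ = 2^k·μ_σ with μ_σ odd and k ∈ ℕ₀, and let ℓ ∈ ℕ₀ be the unique nonnegative integer with 1/2 ≤ 2^ℓ(n_σ − m_σ)/m_σ < 1. Set ρ = max{0, k − ℓ} and τ = max{0, ℓ − k}. Then n_{K(σ)} = 2^ρ·μ_σ and m_{K(σ)} = 2^τ·(n_σ − m_σ). -/

import Mathlib

/-- The positive rational numbers ℚ₊. -/
abbrev Qpos := {q : ℚ // 0 < q}

/-- Octave equivalence on ℚ₊: `q₁ ∼ q₂` iff `q₁ = 2^n * q₂` for some `n ∈ ℤ`. -/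
def octaveRel (q₁ q₂ : Qpos) : Prop := ∃ n : ℤ, (q₁ : ℚ) = 2 ^ n * (q₂ : ℚ)

/-- The group of musical intervals `𝔖 = ℚ₊/∼`. -/
def MusInt := Quot octaveRel

/-- The musical interval `[q]` represented by a positive rational `q`. -/
def cls (q : ℚ) (h : 0 < q) : MusInt := Quot.mk octaveRel ⟨q, h⟩

/-- The octave `𝔬 = [1/2]`. -/
def octave : MusInt := cls (1/2) (by norm_num)

/-- `repSpec σ (m, n)` says that `(m, n)` is a reduced representative of `σ`,
i.e. `σ = [m/n]`, `1/2 ≤ m/n < 1` and `gcd(n, m) = 1`. -/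
def repSpec (σ : MusInt) (p : ℕ × ℕ) : Prop :=
  ∃ h : (0 : ℚ) < (p.1 : ℚ) / (p.2 : ℚ),
    σ = cls ((p.1 : ℚ) / (p.2 : ℚ)) h ∧
    (1 : ℚ) / 2 ≤ (p.1 : ℚ) / (p.2 : ℚ) ∧ (p.1 : ℚ) / (p.2 : ℚ) < 1 ∧
    Nat.gcd p.2 p.1 = 1

open Classical in
/-- The canonical reduced representative `(m_σ, n_σ)` of a musical interval. -/
noncomputable def rep (σ : MusInt) : ℕ × ℕ :=
  if h : ∃ p, repSpec σ p then h.choose else (1, 2)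

/-- The numerator `m_σ`, so that `σ = [m_σ/n_σ]`. -/
noncomputable def mVal (σ : MusInt) : ℕ := (rep σ).1

/-- The map `𝒩`, sending `σ` to the denominator `n_σ`, so that `σ = [m_σ/n_σ]`. -/
noncomputable def nVal (σ : MusInt) : ℕ := (rep σ).2

/-- The Kepler map `K(σ) = [(n_σ - m_σ)/m_σ]`. -/
noncomputable def kepler (σ : MusInt) : MusInt :=
  if h : (0 : ℚ) < ((nVal σ : ℚ) - (mVal σ : ℚ)) / (mVal σ : ℚ) then
    cls (((nVal σ : ℚ) - (mVal σ : ℚ)) / (mVal σ : ℚ)) h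
  else octave

/-- The height `𝔥(σ) = min {ℓ ∈ ℕ₀ : K^ℓ(σ) = 𝔬}`. -/
noncomputable def height (σ : MusInt) : ℕ := sInf {ℓ : ℕ | kepler^[ℓ] σ = octave}

/-- `n` is an Euclidean Gauss–Wantzel number: `n = 2^k * 3^l * 5^m` with
`l, m ∈ {0, 1}` and `n > 1`. -/
def IsEuclidean (n : ℕ) : Prop :=
  1 < n ∧ ∃ k l m : ℕ, (l = 0 ∨ l = 1) ∧ (m = 0 ∨ m = 1) ∧ n = 2 ^ k * 3 ^ l * 5 ^ m

/-- `p` is a Fermat prime: a prime of the form `2^(2^n) + 1`. -/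
def IsFermatPrime (p : ℕ) : Prop := p.Prime ∧ ∃ n : ℕ, p = 2 ^ (2 ^ n) + 1

/-- `n` is a Gauss–Wantzel number: `n > 1` is a power of `2` times a product of
distinct Fermat primes. -/
def IsGaussWantzel (n : ℕ) : Prop :=
  1 < n ∧ ∃ (k : ℕ) (s : Finset ℕ), (∀ p ∈ s, IsFermatPrime p) ∧ n = 2 ^ k * ∏ p ∈ s, p

/-- `σ` is Euclidean consonant: all members of its second Kepler sequence are
Euclidean Gauss–Wantzel numbers. -/
def EuclideanConsonant (σ : MusInt) : Prop :=
  ∀ j ≤ height σ, IsEuclidean (nVal (kepler^[j] σ))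

/-- `σ` is Gaussian consonant: all members of its second Kepler sequence are
Gauss–Wantzel numbers. -/
def GaussianConsonant (σ : MusInt) : Prop :=
  ∀ j ≤ height σ, IsGaussWantzel (nVal (kepler^[j] σ))

lemma octaveRel_equivalence : Equivalence octaveRel := by
  constructor
  · intro x; exact ⟨0, by simp⟩
  · rintro x y ⟨n, h⟩
    refine ⟨-n, ?_⟩
    rw [h, ← mul_assoc, ← zpow_add₀ (by norm_num : (2:ℚ) ≠ 0)]
    simp
  · rintro x y z ⟨n, h⟩ ⟨m, h'⟩
    exact ⟨n + m, by rw [h, h', ← mul_assoc, ← zpow_add₀ (by norm_num : (2:ℚ) ≠ 0)]⟩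

lemma cls_eq_iff {q q' : ℚ} (h : 0 < q) (h' : 0 < q') :
    cls q h = cls q' h' ↔ ∃ t : ℤ, q = 2 ^ t * q' := by
  show (Quot.mk octaveRel ⟨q, h⟩ : Quot octaveRel) = Quot.mk octaveRel ⟨q', h'⟩ ↔ _
  rw [Quot.eq, octaveRel_equivalence.eqvGen_iff]
  rfl

lemma repSpec_unique {σ : MusInt} {p p' : ℕ × ℕ} (h : repSpec σ p) (h' : repSpec σ p') :
    p = p' := by
  obtain ⟨hp, hcl, hle, hlt, hg⟩ := h
  obtain ⟨hp', hcl', hle', hlt', hg'⟩ := h'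
  have h2 : p.2 ≠ 0 := by rintro hz; rw [hz] at hp; simp at hp
  have h2' : p'.2 ≠ 0 := by rintro hz; rw [hz] at hp'; simp at hp'
  have h2q : (0:ℚ) < (p.2:ℚ) := by positivity
  have h2q' : (0:ℚ) < (p'.2:ℚ) := by positivity
  obtain ⟨t, ht⟩ := (cls_eq_iff hp hp').mp (hcl ▸ hcl')
  have ht0 : t = 0 := by
    have ha : t < 1 := by
      rw [← zpow_lt_zpow_iff_right₀ (by norm_num : (1:ℚ) < 2)]
      have : (2:ℚ)^t * ((p'.1:ℚ)/(p'.2:ℚ)) < 1 := ht ▸ hlt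
      have h12 : (1:ℚ)/2 ≤ (p'.1:ℚ)/(p'.2:ℚ) := hle'
      have hzp : (0:ℚ) < 2^t := by positivity
      simp only [zpow_one]
      nlinarith
    have hb : (-1:ℤ) < t := by
      rw [← zpow_lt_zpow_iff_right₀ (by norm_num : (1:ℚ) < 2)]
      rw [zpow_neg_one]
      have : (1:ℚ)/2 ≤ (2:ℚ)^t * ((p'.1:ℚ)/(p'.2:ℚ)) := ht ▸ hle
      have hlt1 : (p'.1:ℚ)/(p'.2:ℚ) < 1 := hlt'
      have hzp : (0:ℚ) < (p'.1:ℚ)/(p'.2:ℚ) := hp'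
      nlinarith
    omega
  rw [ht0] at ht
  simp only [zpow_zero, one_mul] at ht
  have hmul : p.1 * p'.2 = p'.1 * p.2 := by
    have := (div_eq_div_iff h2q.ne' h2q'.ne').mp ht
    exact_mod_cast this
  have hd : p.2 = p'.2 := by
    have c : Nat.Coprime p.2 p.1 := hg
    have c' : Nat.Coprime p'.2 p'.1 := hg'
    have d1 : p.2 ∣ p'.2 := by
      have hh : p.2 ∣ p.1 * p'.2 := by rw [hmul]; exact dvd_mul_left _ _
      exact (Nat.Coprime.dvd_of_dvd_mul_left c hh)
    have d2 : p'.2 ∣ p.2 := by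
      have hh : p'.2 ∣ p'.1 * p.2 := by rw [← hmul]; exact dvd_mul_left _ _
      exact (Nat.Coprime.dvd_of_dvd_mul_left c' hh)
    exact Nat.dvd_antisymm d1 d2
  have hn : p.1 = p'.1 := by
    rw [hd] at hmul
    exact Nat.eq_of_mul_eq_mul_right (Nat.pos_of_ne_zero h2') hmul
  exact Prod.ext hn hd

open Classical in
lemma rep_eq_of_spec {σ : MusInt} {p : ℕ × ℕ} (h : repSpec σ p) : rep σ = p := by
  have hex : ∃ p, repSpec σ p := ⟨p, h⟩
  rw [rep, dif_pos hex]
  exact repSpec_unique hex.choose_spec h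

/-- for `σ ≠ 𝔬`, writing `m_σ = 2^k * μ` with `μ` odd and choosing
`ℓ` with `1/2 ≤ 2^ℓ (n_σ - m_σ)/m_σ < 1`, we have `n_{K(σ)} = 2^(max{0,k-ℓ}) * μ`
and `m_{K(σ)} = 2^(max{0,ℓ-k}) * (n_σ - m_σ)` (here `-` on `ℕ` is truncated
subtraction, so `k - ℓ = max{0, k - ℓ}`). -/
theorem rep_kepler (σ : MusInt) (hσ : σ ≠ octave) (k μ ℓ : ℕ) (hμ : Odd μ)
    (hm : mVal σ = 2 ^ k * μ)
    (h1 : (1 : ℚ) / 2 ≤ (2 ^ ℓ * ((nVal σ : ℚ) - (mVal σ : ℚ))) / (mVal σ : ℚ))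
    (h2 : (2 ^ ℓ * ((nVal σ : ℚ) - (mVal σ : ℚ))) / (mVal σ : ℚ) < 1) :
    nVal (kepler σ) = 2 ^ (k - ℓ) * μ ∧
      mVal (kepler σ) = 2 ^ (ℓ - k) * (nVal σ - mVal σ) := by
  classical
  -- `rep σ` satisfies the spec
  have hspec : repSpec σ (rep σ) := by
    by_cases hex : ∃ p, repSpec σ p
    · rw [rep, dif_pos hex]; exact hex.choose_spec
    · exfalso
      have hr : rep σ = (1, 2) := by rw [rep, dif_neg hex]
      have hmv : mVal σ = 1 := by rw [mVal, hr]
      have hnv : nVal σ = 2 := by rw [nVal, hr]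
      rw [hmv, hnv] at h2
      norm_num at h2
      have : (1:ℚ) ≤ 2 ^ ℓ := one_le_pow₀ (by norm_num)
      linarith
  obtain ⟨hp, hcl, hle, hlt, hg⟩ := hspec
  set m := mVal σ with hmdef
  set n := nVal σ with hndef
  have hrm : (rep σ).1 = m := rfl
  have hrn : (rep σ).2 = n := rfl
  rw [hrm, hrn] at hle hlt hg
  clear hcl hp
  have hp : (0:ℚ) < (m:ℚ) / (n:ℚ) := lt_of_lt_of_le (by norm_num) hle
  have hn0 : n ≠ 0 := by rintro hz; rw [hz] at hp; simp at hp
  have hm0 : m ≠ 0 := by rintro hz; rw [hz] at hp; simp at hp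
  have hnq : (0:ℚ) < (n:ℚ) := by positivity
  have hmq : (0:ℚ) < (m:ℚ) := by positivity
  have hmn : m < n := by
    have : (m:ℚ) < (n:ℚ) := (div_lt_one hnq).mp hlt
    exact_mod_cast this
  have hμ0 : μ ≠ 0 := by rintro rfl; simp at hμ
  -- the candidate reduced representative of `K σ`
  set p' : ℕ × ℕ := (2 ^ (ℓ - k) * (n - m), 2 ^ (k - ℓ) * μ) with hp'def
  have hkey : ((p'.1 : ℕ) : ℚ) / ((p'.2 : ℕ) : ℚ)
      = (2 ^ ℓ * ((n : ℚ) - (m : ℚ))) / (m : ℚ) := by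
    have hcast : ((n - m : ℕ) : ℚ) = (n : ℚ) - (m : ℚ) := by
      push_cast [Nat.cast_sub hmn.le]; ring
    have hmc : (m : ℚ) = 2 ^ k * (μ : ℚ) := by rw [hm]; push_cast; ring
    rcases le_total k ℓ with hkl | hkl
    · have e1 : k - ℓ = 0 := by omega
      have e2 : (2:ℚ) ^ (ℓ - k) * 2 ^ k = 2 ^ ℓ := by
        rw [← pow_add]; congr 1; omega
      rw [hp'def]
      push_cast [hcast, e1]
      rw [hmc]
      rw [div_eq_div_iff (by positivity) (by positivity)]
      linear_combination ((n:ℚ) - 2 ^ k * (μ:ℚ)) * (μ:ℚ) * e2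
    · have e1 : ℓ - k = 0 := by omega
      have e2 : (2:ℚ) ^ (k - ℓ) * 2 ^ ℓ = 2 ^ k := by
        rw [← pow_add]; congr 1; omega
      rw [hp'def]
      push_cast [hcast, e1]
      rw [hmc]
      have h2kl : (0:ℚ) < 2 ^ (k - ℓ) * (μ:ℚ) := by positivity
      rw [div_eq_div_iff (by positivity) (by positivity)]
      linear_combination (-((n:ℚ) - 2 ^ k * (μ:ℚ)) * (μ:ℚ)) * e2
  have hppos : (0:ℚ) < ((p'.1 : ℕ) : ℚ) / ((p'.2 : ℕ) : ℚ) := by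
    rw [hkey]; linarith
  -- `K σ` is represented by `(n-m)/m`
  have hkpos : (0 : ℚ) < ((n : ℚ) - (m : ℚ)) / (m : ℚ) := by
    have hlt2 : (m:ℚ) < (n:ℚ) := by exact_mod_cast hmn
    exact div_pos (by linarith) hmq
  have hkep : kepler σ = cls (((n : ℚ) - (m : ℚ)) / (m : ℚ)) hkpos := by
    rw [kepler, ← hmdef, ← hndef, dif_pos hkpos]
  -- the spec for `K σ`
  have hspec' : repSpec (kepler σ) p' := by
    refine ⟨hppos, ?_, ?_, ?_, ?_⟩
    · rw [hkep]
      rw [cls_eq_iff hkpos hppos]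
      refine ⟨-(ℓ : ℤ), ?_⟩
      rw [hkey, zpow_neg, zpow_natCast]
      rw [mul_div_assoc]
      rw [← mul_assoc, inv_mul_cancel₀ (by positivity)]
      ring
    · rw [hkey]; exact h1
    · rw [hkey]; exact h2
    · show Nat.gcd (2 ^ (k - ℓ) * μ) (2 ^ (ℓ - k) * (n - m)) = 1
      have hco_mn : Nat.Coprime m (n - m) :=
        (Nat.coprime_sub_self_right hmn.le).mpr (Nat.Coprime.symm hg)
      have hμdvd : μ ∣ m := ⟨2 ^ k, by rw [hm, mul_comm]⟩
      have hco_μ : Nat.Coprime μ (n - m) := Nat.Coprime.coprime_dvd_left hμdvd hco_mn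
      rcases le_total k ℓ with hkl | hkl
      · have e1 : k - ℓ = 0 := by omega
        rw [e1, pow_zero, one_mul]
        exact Nat.Coprime.mul_right
          ((Odd.coprime_two_right hμ).pow_right _) hco_μ
      · have e1 : ℓ - k = 0 := by omega
        rw [e1, pow_zero, one_mul]
        rcases Nat.eq_zero_or_pos (k - ℓ) with hz | hpos
        · rw [hz, pow_zero, one_mul]; exact hco_μ
        · have hk0 : 0 < k := by omega
          have h2m : 2 ∣ m := by
            rw [hm]
            exact Dvd.dvd.mul_right (dvd_pow_self 2 hk0.ne') μ
          have hnodd : Odd n := by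
            have : Nat.Coprime n 2 := Nat.Coprime.coprime_dvd_right h2m hg
            exact Nat.coprime_two_right.mp this
          have hnm_odd : Odd (n - m) := by
            rcases hnodd with ⟨a, ha⟩
            obtain ⟨b, hb⟩ := h2m
            exact ⟨a - b, by omega⟩
          exact Nat.Coprime.mul
            ((Odd.coprime_two_left hnm_odd).pow_left _)
            hco_μ
  have hrep' : rep (kepler σ) = p' := rep_eq_of_spec hspec'
  constructor
  · show (rep (kepler σ)).2 = 2 ^ (k - ℓ) * μ
    rw [hrep']
  · show (rep (kepler σ)).1 = 2 ^ (ℓ - k) * (n - m)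
    rw [hrep']
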